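/- Fix an integer r. Suppose C, K : \mathbb{N} \to \mathbb{Z} satisfy, for all nonnegative integers m: C(m) = -2^m F_r - F_{r+1} - \sum_{j=0}^{m-1} \binom{m}{j} (2^{m-j} + 1) C(j) and K(m) = -2^m L_r - L_{r+1} - \sum_{j=0}^{m-1} \binom{m}{j} (2^{m-j} + 1) K(j) (empty sums when m = 0). Then for all nonnegative integers m: C(m) = -\delta_{m,0} F_r + (-1)^{m+1} \sum_{j=0}^{m} A(m,j) F_{j+m+r+1} and K(m) = -\delta_{m,0} L_r + (-1)^{m+1} \sum_{j=0}^{m} A(m,j) L_{j+m+r+1}, where \delta_{m,0} is the Kronecker delta. -/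
import Mathlib

/-- Fibonacci numbers over the integers, `F_{-n} = (-1)^{n-1} F_n`. -/
def fibZ (n : ℤ) : ℤ :=
  if 0 ≤ n then (Nat.fib n.toNat : ℤ)
  else (-1) ^ ((-n).toNat + 1) * (Nat.fib (-n).toNat : ℤ)

/-- Lucas numbers over the integers, `L_{-n} = (-1)^n L_n`. -/
def lucasZ (n : ℤ) : ℤ := fibZ (n - 1) + fibZ (n + 1)

/-- The Eulerian numbers `A(i,j) = ∑_{t=0}^{j} (-1)^t C(i+1,t) (j-t)^i`. -/
def eulerianA (i j : ℕ) : ℤ :=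
  ∑ t ∈ Finset.range (j + 1), (-1 : ℤ) ^ t * (Nat.choose (i + 1) t) * ((j - t : ℕ) ^ i : ℤ)


lemma fibZ_natCast (n : ℕ) : fibZ (n : ℤ) = (Nat.fib n : ℤ) := by
  simp [fibZ]

lemma fibZ_negSucc (n : ℕ) : fibZ (Int.negSucc n) = (-1) ^ (n + 2) * (Nat.fib (n+1) : ℤ) := by
  rw [fibZ, if_neg (by simp [Int.negSucc_eq]; omega)]
  have h : (-Int.negSucc n) = ((n+1:ℕ):ℤ) := by simp [Int.negSucc_eq]
  rw [h, Int.toNat_natCast]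

lemma fibZ_rec (n : ℤ) : fibZ (n + 2) = fibZ (n + 1) + fibZ n := by
  match n with
  | Int.ofNat k =>
    have h1 : (Int.ofNat k) + 2 = ((k+2 : ℕ) : ℤ) := by push_cast [Int.ofNat_eq_coe]; ring
    have h2 : (Int.ofNat k) + 1 = ((k+1 : ℕ) : ℤ) := by push_cast [Int.ofNat_eq_coe]; ring
    rw [h1, h2, fibZ_natCast, fibZ_natCast, show (Int.ofNat k) = ((k:ℕ):ℤ) from rfl, fibZ_natCast,
      Nat.fib_add_two]
    push_cast; ring
  | Int.negSucc 0 => decide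
  | Int.negSucc 1 => decide
  | Int.negSucc (k+2) =>
    have h1 : (Int.negSucc (k+2)) + 2 = Int.negSucc k := by simp [Int.negSucc_eq]; ring
    have h2 : (Int.negSucc (k+2)) + 1 = Int.negSucc (k+1) := by simp [Int.negSucc_eq]; ring
    rw [h1, h2, fibZ_negSucc, fibZ_negSucc, fibZ_negSucc]
    have e3 : Nat.fib (k+2+1) = Nat.fib (k+1) + Nat.fib (k+2) := Nat.fib_add_two
    have e2 : Nat.fib (k+1+1) = Nat.fib k + Nat.fib (k+1) := Nat.fib_add_two
    rw [e3, e2]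
    push_cast; ring


def Sg (p c n : ℕ) : ℤ :=
  ∑ s ∈ Finset.range (n + 1), (-1 : ℤ) ^ s * (Nat.choose c s) * ((n - s : ℕ) ^ p : ℤ)

lemma eulerianA_eq_Sg (m i : ℕ) : eulerianA m i = Sg m (m+1) i := rfl

lemma Sg_zero (p c : ℕ) : Sg p c 0 = (0:ℤ) ^ p := by
  simp [Sg]

lemma Sg_step (p c n : ℕ) : Sg p (c+1) (n+1) = Sg p c (n+1) - Sg p c n := by
  have key : Sg p c (n+1) - Sg p (c+1) (n+1) = Sg p c n := by
    unfold Sg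
    rw [← Finset.sum_sub_distrib]
    rw [Finset.sum_range_succ' (fun s => (-1 : ℤ) ^ s * (Nat.choose c s) * (((n+1) - s : ℕ) ^ p : ℤ)
        - (-1 : ℤ) ^ s * (Nat.choose (c+1) s) * (((n+1) - s : ℕ) ^ p : ℤ)) (n+1)]
    have h0 : ((-1 : ℤ) ^ 0 * (Nat.choose c 0) * (((n+1) - 0 : ℕ) ^ p : ℤ)
        - (-1 : ℤ) ^ 0 * (Nat.choose (c+1) 0) * (((n+1) - 0 : ℕ) ^ p : ℤ)) = 0 := by simp
    rw [h0, add_zero]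
    apply Finset.sum_congr rfl
    intro s _
    have hc : ((c+1).choose (s+1) : ℤ) = (c.choose s : ℤ) + (c.choose (s+1) : ℤ) := by
      rw [Nat.choose_succ_succ]; push_cast; ring
    have hn : (n + 1) - (s + 1) = n - s := by omega
    rw [hn, hc]
    ring
  linarith [key]

lemma Sg_vanish : ∀ p c n : ℕ, p < c → c ≤ n → Sg p c n = 0 := by
  intro p
  induction p using Nat.strong_induction_on with
  | _ p IH =>
    intro c n hpc hcn
    obtain ⟨c', rfl⟩ : ∃ c', c = c' + 1 := ⟨c - 1, by omega⟩
    obtain ⟨n', rfl⟩ : ∃ n', n = n' + 1 := ⟨n - 1, by omega⟩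
    rw [Sg_step]
    -- expand Sg p c' (n'+1) = ∑_{i ≤ p} (p.choose i) * Sg i c' n'
    have expand : Sg p c' (n'+1) = ∑ i ∈ Finset.range (p+1), (p.choose i : ℤ) * Sg i c' n' := by
      unfold Sg
      rw [Finset.sum_range_succ]
      have hlast : (-1 : ℤ) ^ (n'+1) * (Nat.choose c' (n'+1)) * (((n'+1) - (n'+1) : ℕ) ^ p : ℤ) = 0 := by
        have : Nat.choose c' (n'+1) = 0 := Nat.choose_eq_zero_of_lt (by omega)
        simp [this]
      rw [hlast, add_zero]
      have h1 : ∀ x ∈ Finset.range (n'+1), (-1:ℤ)^x * (c'.choose x) * (((n'+1) - x : ℕ)^p : ℤ)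
          = ∑ i ∈ Finset.range (p+1), (p.choose i : ℤ) * ((-1:ℤ)^x * (c'.choose x) * ((n' - x : ℕ)^i : ℤ)) := by
        intro x hx
        have hnx : ((n'+1) - x : ℕ) = (n' - x) + 1 := by
          simp only [Finset.mem_range] at hx; omega
        rw [hnx]
        push_cast
        rw [add_pow, Finset.mul_sum]
        apply Finset.sum_congr rfl
        intro i _
        push_cast
        ring
      rw [Finset.sum_congr rfl h1, Finset.sum_comm]
      apply Finset.sum_congr rfl
      intro i _
      rw [Finset.mul_sum]
    rw [expand, Finset.sum_range_succ, Nat.choose_self]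
    have hz : ∀ i ∈ Finset.range p, (p.choose i : ℤ) * Sg i c' n' = 0 := by
      intro i hi
      simp only [Finset.mem_range] at hi
      rw [IH i hi c' n' (by omega) (by omega), mul_zero]
    rw [Finset.sum_eq_zero hz]
    push_cast
    ring

lemma altFib : ∀ (c : ℕ) (r : ℤ), ∑ k ∈ Finset.range (c+1), (-1:ℤ)^k * (c.choose k) * fibZ (k + r) = (-1)^c * fibZ (r - c) := by
  intro c
  induction c with
  | zero => intro r; simp
  | succ c IH =>
    intro r
    rw [Finset.sum_range_succ' (fun k => (-1:ℤ)^k * ((c+1).choose k) * fibZ (k + r)) (c+1)]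
    have hsplit : ∀ k ∈ Finset.range (c+1),
        (-1:ℤ)^(k+1) * (((c+1).choose (k+1) : ℕ) : ℤ) * fibZ (((k+1 : ℕ) : ℤ) + r)
        = -((-1:ℤ)^k * (c.choose k) * fibZ (k + (r+1)))
          + (-1:ℤ)^(k+1) * (c.choose (k+1)) * fibZ (((k+1:ℕ) : ℤ) + r) := by
      intro k _
      have harg : ((k+1 : ℕ) : ℤ) + r = (k : ℤ) + (r + 1) := by push_cast; ring
      rw [Nat.choose_succ_succ, harg]
      push_cast
      ring
    rw [Finset.sum_congr rfl hsplit, Finset.sum_add_distrib]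
    have hsec : ∑ k ∈ Finset.range (c+1), (-1:ℤ)^(k+1) * ((c.choose (k+1) : ℕ) : ℤ) * fibZ (((k+1:ℕ) : ℤ) + r)
        = (-1)^c * fibZ (r - c) - fibZ ((0:ℕ) + r) := by
      have h2 : ∑ k ∈ Finset.range (c+2), (-1:ℤ)^k * (c.choose k) * fibZ (k + r)
          = ∑ k ∈ Finset.range (c+1), (-1:ℤ)^(k+1) * (c.choose (k+1)) * fibZ (((k+1:ℕ):ℤ) + r)
            + (-1:ℤ)^0 * (c.choose 0) * fibZ (((0:ℕ):ℤ) + r) :=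
        Finset.sum_range_succ' _ (c+1)
      rw [Finset.sum_range_succ, Nat.choose_eq_zero_of_lt (Nat.lt_succ_self c), IH r] at h2
      push_cast [Nat.choose_zero_right] at h2 ⊢
      linarith [h2]
    rw [hsec]
    have hneg : ∑ k ∈ Finset.range (c+1), -((-1:ℤ)^k * (c.choose k) * fibZ (k + (r+1)))
        = -((-1:ℤ)^c * fibZ (r + 1 - c)) := by
      rw [Finset.sum_neg_distrib, IH (r+1)]
    rw [hneg]
    have hrec := fibZ_rec (r - 1 - c)
    have e1 : r - 1 - (c:ℤ) + 2 = r + 1 - c := by ring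
    have e2 : r - 1 - (c:ℤ) + 1 = r - c := by ring
    have e3 : r - 1 - (c:ℤ) = r - ((c:ℕ)+1 : ℕ) := by push_cast; ring
    rw [e1, e2, e3] at hrec
    push_cast
    push_cast at hrec
    rw [hrec]
    simp [pow_succ]
    ring

def Vv (p c : ℕ) (r : ℤ) : ℤ := ∑ n ∈ Finset.range c, Sg p c n * fibZ (n + r)

lemma Vv_add (p c : ℕ) (r : ℤ) : Vv p c (r - 1) + Vv p c r = Vv p c (r + 1) := by
  unfold Vv
  rw [← Finset.sum_add_distrib]
  apply Finset.sum_congr rfl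
  intro n _
  have h := fibZ_rec ((n:ℤ) + r - 1)
  have e1 : (n:ℤ) + r - 1 + 2 = (n:ℤ) + (r+1) := by ring
  have e2 : (n:ℤ) + r - 1 + 1 = (n:ℤ) + r := by ring
  have e3 : (n:ℤ) + (r-1) = (n:ℤ) + r - 1 := by ring
  rw [e1, e2] at h
  rw [e3, h]
  ring

lemma Vv_step (p c : ℕ) (hc : p + 1 ≤ c) (r : ℤ) : Vv p (c+1) r = - Vv p c (r - 1) := by
  have key : Vv p (c+1) r = Vv p c r - Vv p c (r + 1) := by
    unfold Vv
    rw [Finset.sum_range_succ' (fun n => Sg p (c+1) n * fibZ (n + r)) c]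
    have hterm : ∀ n ∈ Finset.range c,
        Sg p (c+1) (n+1) * fibZ (((n+1:ℕ):ℤ) + r)
        = Sg p c (n+1) * fibZ (((n+1:ℕ):ℤ) + r) - Sg p c n * fibZ (n + (r+1)) := by
      intro n _
      rw [Sg_step]
      have harg : ((n+1:ℕ):ℤ) + r = (n:ℤ) + (r+1) := by push_cast; ring
      rw [harg]; ring
    rw [Finset.sum_congr rfl hterm, Finset.sum_sub_distrib]
    have hfirst : ∑ n ∈ Finset.range c, Sg p c (n+1) * fibZ (((n+1:ℕ):ℤ) + r)
        = (∑ n ∈ Finset.range c, Sg p c n * fibZ (n + r)) - Sg p c 0 * fibZ (((0:ℕ):ℤ) + r) := by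
      have h2 : ∑ n ∈ Finset.range (c+1), Sg p c n * fibZ (n + r)
          = ∑ n ∈ Finset.range c, Sg p c (n+1) * fibZ (((n+1:ℕ):ℤ) + r)
            + Sg p c 0 * fibZ (((0:ℕ):ℤ) + r) :=
        Finset.sum_range_succ' _ c
      rw [Finset.sum_range_succ, Sg_vanish p c c (by omega) le_rfl, zero_mul, add_zero] at h2
      linarith [h2]
    rw [hfirst, Sg_zero]
    have hz : Sg p (c+1) 0 = (0:ℤ)^p := Sg_zero p (c+1)
    rw [hz]
    ring
  have hadd := Vv_add p c r
  rw [key]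
  linarith [hadd]

lemma Vv_shift (p : ℕ) : ∀ (k : ℕ) (r : ℤ), Vv p (p+1+k) r = (-1)^k * Vv p (p+1) (r - k) := by
  intro k
  induction k with
  | zero => intro r; simp
  | succ k IH =>
    intro r
    have h := Vv_step p (p+1+k) (by omega) r
    have e : p + 1 + (k+1) = (p+1+k) + 1 := by ring
    rw [e, h, IH (r-1)]
    have e2 : r - 1 - (k:ℤ) = r - ((k+1:ℕ):ℤ) := by push_cast; ring
    rw [e2]
    ring

lemma BT (m c n : ℕ) (a : ℤ) :
    ∑ j ∈ Finset.range (m+1), (m.choose j : ℤ) * a^(m-j) * Sg j c n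
    = ∑ s ∈ Finset.range (n+1), (-1:ℤ)^s * (c.choose s) * (((n - s : ℕ) : ℤ) + a)^m := by
  unfold Sg
  simp_rw [Finset.mul_sum]
  rw [Finset.sum_comm]
  apply Finset.sum_congr rfl
  intro s _
  rw [add_pow, Finset.mul_sum]
  apply Finset.sum_congr rfl
  intro j _
  push_cast
  ring

lemma Sg_one (p c : ℕ) (hp : 1 ≤ p) : Sg p c 1 = 1 := by
  unfold Sg
  rw [Finset.sum_range_succ, Finset.sum_range_one]
  have h1 : (1:ℕ) - 1 = 0 := rfl
  have h2 : (1:ℕ) - 0 = 1 := rfl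
  rw [h1, h2]
  simp [zero_pow (by omega : p ≠ 0)]

lemma Sh1 (m n : ℕ) (hm : 1 ≤ m) :
    Sg m (m+1) (n+1)
    = ∑ s ∈ Finset.range (n+1), (-1:ℤ)^s * ((m+1).choose s) * (((n - s : ℕ) : ℤ) + 1)^m := by
  unfold Sg
  conv_lhs => rw [Finset.sum_range_succ]
  have h0 : ((n+1) - (n+1) : ℕ) = 0 := by omega
  rw [h0]
  rw [Nat.cast_zero, zero_pow (by omega : m ≠ 0), mul_zero, add_zero]
  apply Finset.sum_congr rfl
  intro s hs
  simp only [Finset.mem_range] at hs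
  have h1 : ((n+1) - s : ℕ) = (n - s) + 1 := by omega
  rw [h1]
  push_cast
  ring

lemma Sh2 (m n : ℕ) (hm : 1 ≤ m) :
    Sg m (m+1) (n+2)
    = (∑ s ∈ Finset.range (n+1), (-1:ℤ)^s * ((m+1).choose s) * (((n - s : ℕ) : ℤ) + 2)^m)
      + (-1:ℤ)^(n+1) * ((m+1).choose (n+1)) := by
  unfold Sg
  conv_lhs => rw [show n+2+1 = (n+1)+1+1 from rfl, Finset.sum_range_succ, Finset.sum_range_succ]
  have h0 : ((n+2) - ((n+1)+1) : ℕ) = 0 := by omega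
  have h1 : ((n+2) - (n+1) : ℕ) = 1 := by omega
  rw [h0, h1]
  rw [Nat.cast_zero, zero_pow (by omega : m ≠ 0), mul_zero, add_zero]
  rw [Nat.cast_one, one_pow, mul_one]
  congr 1
  apply Finset.sum_congr rfl
  intro s hs
  simp only [Finset.mem_range] at hs
  have h2 : ((n+2) - s : ℕ) = (n - s) + 2 := by omega
  rw [h2]
  push_cast
  ring

lemma B1 (m : ℕ) (hm : 1 ≤ m) (r : ℤ) :
    ∑ j ∈ Finset.range (m+1), (m.choose j : ℤ) * Vv j (m+1) r = Vv m (m+1) (r-1) := by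
  have step1 : ∑ j ∈ Finset.range (m+1), (m.choose j : ℤ) * Vv j (m+1) r
      = ∑ n ∈ Finset.range (m+1), Sg m (m+1) (n+1) * fibZ (n + r) := by
    unfold Vv
    simp_rw [Finset.mul_sum]
    rw [Finset.sum_comm]
    apply Finset.sum_congr rfl
    intro n _
    have hswap : ∑ j ∈ Finset.range (m+1), (m.choose j : ℤ) * (Sg j (m+1) n * fibZ (n + r))
        = (∑ j ∈ Finset.range (m+1), (m.choose j : ℤ) * (1:ℤ)^(m-j) * Sg j (m+1) n) * fibZ (n+r) := by
      rw [Finset.sum_mul]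
      apply Finset.sum_congr rfl
      intro j _
      ring
    rw [hswap, BT m (m+1) n 1]
    congr 1
    exact (Sh1 m n hm).symm
  rw [step1]
  have hT1 : ∑ n ∈ Finset.range (m+2), Sg m (m+1) n * fibZ (n + (r-1))
      = Vv m (m+1) (r-1) := by
    rw [Finset.sum_range_succ, Sg_vanish m (m+1) (m+1) (by omega) le_rfl, zero_mul, add_zero]
    rfl
  have hT2 : ∑ n ∈ Finset.range (m+2), Sg m (m+1) n * fibZ (n + (r-1))
      = ∑ n ∈ Finset.range (m+1), Sg m (m+1) (n+1) * fibZ (((n+1:ℕ):ℤ) + (r-1))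
        + Sg m (m+1) 0 * fibZ (((0:ℕ):ℤ) + (r-1)) := Finset.sum_range_succ' _ (m+1)
  rw [Sg_zero, zero_pow (by omega : m ≠ 0), zero_mul, add_zero] at hT2
  rw [← hT1, hT2]
  apply Finset.sum_congr rfl
  intro n _
  congr 1
  push_cast
  ring

lemma B2 (m : ℕ) (hm : 1 ≤ m) (r : ℤ) :
    ∑ j ∈ Finset.range (m+1), (m.choose j : ℤ) * 2^(m-j) * Vv j (m+1) r
    = Vv m (m+1) (r-2) + (-1:ℤ)^m * fibZ (r - m - 2) := by
  have step1 : ∑ j ∈ Finset.range (m+1), (m.choose j : ℤ) * 2^(m-j) * Vv j (m+1) r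
      = ∑ n ∈ Finset.range (m+1),
          (Sg m (m+1) (n+2) - (-1:ℤ)^(n+1) * (((m+1).choose (n+1) : ℕ) : ℤ)) * fibZ (n + r) := by
    unfold Vv
    simp_rw [Finset.mul_sum]
    rw [Finset.sum_comm]
    apply Finset.sum_congr rfl
    intro n _
    have hswap : ∑ j ∈ Finset.range (m+1), (m.choose j : ℤ) * 2^(m-j) * (Sg j (m+1) n * fibZ (n + r))
        = (∑ j ∈ Finset.range (m+1), (m.choose j : ℤ) * (2:ℤ)^(m-j) * Sg j (m+1) n) * fibZ (n+r) := by
      rw [Finset.sum_mul]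
      apply Finset.sum_congr rfl
      intro j _
      ring
    rw [hswap, BT m (m+1) n 2]
    congr 1
    have := Sh2 m n hm
    linarith [this]
  rw [step1]
  have hsplit : ∑ n ∈ Finset.range (m+1),
      (Sg m (m+1) (n+2) - (-1:ℤ)^(n+1) * (((m+1).choose (n+1) : ℕ) : ℤ)) * fibZ (n + r)
      = (∑ n ∈ Finset.range (m+1), Sg m (m+1) (n+2) * fibZ (n + r))
        - ∑ n ∈ Finset.range (m+1), (-1:ℤ)^(n+1) * (((m+1).choose (n+1) : ℕ) : ℤ) * fibZ (n + r) := by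
    rw [← Finset.sum_sub_distrib]
    apply Finset.sum_congr rfl
    intro n _
    ring
  rw [hsplit]
  -- Part 1
  have hU1 : ∑ n ∈ Finset.range (m+3), Sg m (m+1) n * fibZ (n + (r-2))
      = Vv m (m+1) (r-2) := by
    rw [Finset.sum_range_succ, Finset.sum_range_succ,
      Sg_vanish m (m+1) (m+1) (by omega) le_rfl,
      Sg_vanish m (m+1) (m+2) (by omega) (by omega)]
    simp only [zero_mul, add_zero]
    rfl
  have hU2 : ∑ n ∈ Finset.range (m+3), Sg m (m+1) n * fibZ (n + (r-2))
      = ∑ n ∈ Finset.range (m+2), Sg m (m+1) (n+1) * fibZ (((n+1:ℕ):ℤ) + (r-2))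
        + Sg m (m+1) 0 * fibZ (((0:ℕ):ℤ) + (r-2)) := Finset.sum_range_succ' _ (m+2)
  have hU3 : ∑ n ∈ Finset.range (m+2), Sg m (m+1) (n+1) * fibZ (((n+1:ℕ):ℤ) + (r-2))
      = ∑ n ∈ Finset.range (m+1), Sg m (m+1) (n+1+1) * fibZ (((n+1+1:ℕ):ℤ) + (r-2))
        + Sg m (m+1) (0+1) * fibZ (((0+1:ℕ):ℤ) + (r-2)) :=
    Finset.sum_range_succ' (fun n => Sg m (m+1) (n+1) * fibZ (((n+1:ℕ):ℤ) + (r-2))) (m+1)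
  rw [Sg_zero, zero_pow (by omega : m ≠ 0), zero_mul, add_zero] at hU2
  rw [Sg_one m (m+1) hm] at hU3
  have hpart1 : ∑ n ∈ Finset.range (m+1), Sg m (m+1) (n+2) * fibZ (n + r)
      = Vv m (m+1) (r-2) - fibZ (r-1) := by
    rw [← hU1, hU2, hU3]
    have e1 : (((0+1:ℕ):ℤ) + (r-2)) = r - 1 := by push_cast; ring
    rw [e1, one_mul]
    have e2 : ∀ n ∈ Finset.range (m+1),
        Sg m (m+1) (n+1+1) * fibZ (((n+1+1:ℕ):ℤ) + (r-2)) = Sg m (m+1) (n+2) * fibZ (n + r) := by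
      intro n _
      congr 2
      push_cast
      ring
    rw [Finset.sum_congr rfl e2]
    ring
  rw [hpart1]
  -- Part 2
  have halt := altFib (m+1) (r-1)
  have halt2 : ∑ k ∈ Finset.range (m+2), (-1:ℤ)^k * (((m+1).choose k : ℕ) : ℤ) * fibZ (k + (r-1))
      = ∑ k ∈ Finset.range (m+1), (-1:ℤ)^(k+1) * (((m+1).choose (k+1) : ℕ) : ℤ) * fibZ (((k+1:ℕ):ℤ) + (r-1))
        + (-1:ℤ)^0 * (((m+1).choose 0 : ℕ) : ℤ) * fibZ (((0:ℕ):ℤ) + (r-1)) :=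
    Finset.sum_range_succ' _ (m+1)
  rw [halt] at halt2
  have e3 : ∀ k ∈ Finset.range (m+1),
      (-1:ℤ)^(k+1) * (((m+1).choose (k+1) : ℕ) : ℤ) * fibZ (((k+1:ℕ):ℤ) + (r-1))
      = (-1:ℤ)^(k+1) * (((m+1).choose (k+1) : ℕ) : ℤ) * fibZ (k + r) := by
    intro k _
    congr 1
    push_cast
    ring
  rw [Finset.sum_congr rfl e3] at halt2
  have e4 : (((0:ℕ):ℤ) + (r-1)) = r - 1 := by push_cast; ring
  rw [e4] at halt2
  simp only [pow_zero, Nat.choose_zero_right, Nat.cast_one, one_mul] at halt2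
  have hpart2 : ∑ n ∈ Finset.range (m+1), (-1:ℤ)^(n+1) * (((m+1).choose (n+1) : ℕ) : ℤ) * fibZ (n + r)
      = (-1:ℤ)^(m+1) * fibZ (r - 1 - (m+1:ℕ)) - fibZ (r-1) := by
    linarith [halt2]
  rw [hpart2]
  have e5 : r - 1 - ((m+1:ℕ):ℤ) = r - (m:ℤ) - 2 := by push_cast; ring
  rw [e5]
  ring

def Ee (m : ℕ) (r : ℤ) : ℤ := ∑ j ∈ Finset.range (m+1), eulerianA m j * fibZ (j + m + r + 1)

lemma Ee_eq_Vv (m : ℕ) (r : ℤ) : Ee m r = Vv m (m+1) ((m:ℤ) + r + 1) := by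
  unfold Ee Vv
  apply Finset.sum_congr rfl
  intro j _
  rw [eulerianA_eq_Sg]
  congr 1
  ring

lemma Vv_to_Ee (m j : ℕ) (hj : j ≤ m) (r : ℤ) :
    Vv j (m+1) ((m:ℤ) + r + 1) = (-1:ℤ)^(m-j) * Ee j r := by
  have h := Vv_shift j (m-j) ((m:ℤ) + r + 1)
  have e : j + 1 + (m - j) = m + 1 := by omega
  rw [e] at h
  rw [h, Ee_eq_Vv]
  congr 2
  rw [Nat.cast_sub hj]
  ring

lemma Imain (m : ℕ) (hm : 1 ≤ m) (r : ℤ) :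
    ∑ j ∈ Finset.range (m+1), (m.choose j : ℤ) * (2^(m-j)+1) * ((-1:ℤ)^(j+1) * Ee j r)
    = (-1:ℤ)^(m+1) * Ee m r - fibZ (r-1) := by
  have hterm : ∀ j ∈ Finset.range (m+1),
      (m.choose j : ℤ) * (2^(m-j)+1) * ((-1:ℤ)^(j+1) * Ee j r)
      = (-1:ℤ)^(m+1) * ((m.choose j : ℤ) * 2^(m-j) * Vv j (m+1) ((m:ℤ) + r + 1)
          + (m.choose j : ℤ) * Vv j (m+1) ((m:ℤ) + r + 1)) := by
    intro j hj
    simp only [Finset.mem_range] at hj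
    rw [Vv_to_Ee m j (by omega) r]
    have hsign : (-1:ℤ)^(m+1) * (-1:ℤ)^(m-j) = (-1:ℤ)^(j+1) := by
      rw [← pow_add, show (m+1)+(m-j) = 2*(m-j)+(j+1) by omega, pow_add, pow_mul]
      norm_num
    rw [← hsign]
    ring
  rw [Finset.sum_congr rfl hterm, ← Finset.mul_sum, Finset.sum_add_distrib,
    B2 m hm ((m:ℤ) + r + 1), B1 m hm ((m:ℤ) + r + 1)]
  have hadd := Vv_add m (m+1) ((m:ℤ) + r + 1 - 1)
  have e1 : (m:ℤ) + r + 1 - 1 - 1 = (m:ℤ) + r + 1 - 2 := by ring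
  have e2 : (m:ℤ) + r + 1 - 1 + 1 = (m:ℤ) + r + 1 := by ring
  rw [e1, e2] at hadd
  have e3 : (m:ℤ) + r + 1 - (m:ℤ) - 2 = r - 1 := by ring
  rw [e3]
  have hEV : Vv m (m+1) ((m:ℤ) + r + 1) = Ee m r := (Ee_eq_Vv m r).symm
  rw [hEV] at hadd
  have hVv2 : Vv m (m+1) ((m:ℤ) + r + 1 - 2) = Ee m r - Vv m (m+1) ((m:ℤ) + r + 1 - 1) := by
    linarith [hadd]
  rw [hVv2]
  have hsgn2 : (-1:ℤ)^(m+1) * (-1:ℤ)^m = -1 := by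
    rw [← pow_add, show (m+1)+m = 2*m+1 by omega, pow_add, pow_mul]
    norm_num
  linear_combination (fibZ (r-1)) * hsgn2


def Dd (m : ℕ) (r : ℤ) : ℤ := -(if m = 0 then (1:ℤ) else 0) * fibZ r + (-1)^(m+1) * Ee m r

lemma Ee_zero (r : ℤ) : Ee 0 r = fibZ (r + 1) := by
  unfold Ee
  rw [Finset.sum_range_one]
  have h1 : eulerianA 0 0 = 1 := by decide
  rw [h1, one_mul]
  congr 1
  push_cast
  ring

lemma fib_three (r : ℤ) : fibZ (r+1) = fibZ r + fibZ (r-1) := by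
  have h := fibZ_rec (r-1)
  have e1 : r - 1 + 2 = r + 1 := by ring
  have e2 : r - 1 + 1 = r := by ring
  rw [e1, e2] at h
  exact h

lemma Dd_rec (m : ℕ) (r : ℤ) :
    Dd m r = -2^m * fibZ r - fibZ (r + 1)
      - ∑ j ∈ Finset.range m, (m.choose j : ℤ) * (2 ^ (m - j) + 1) * Dd j r := by
  rcases Nat.eq_zero_or_pos m with hm | hm
  · subst hm
    simp [Dd, Ee_zero]
    ring
  · have hm1 : 1 ≤ m := hm
    have hterm : ∀ j ∈ Finset.range m,
        (m.choose j : ℤ) * (2 ^ (m - j) + 1) * Dd j r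
        = (m.choose j : ℤ) * (2^(m-j)+1) * ((-1:ℤ)^(j+1) * Ee j r)
          - (if j = 0 then (2^m + 1) * fibZ r else 0) := by
      intro j _
      by_cases hj : j = 0
      · subst hj
        unfold Dd
        norm_num
        ring
      · simp only [Dd, if_neg hj]
        ring
    rw [Finset.sum_congr rfl hterm, Finset.sum_sub_distrib]
    rw [Finset.sum_ite_eq' (Finset.range m) 0 (fun _ => (2^m + 1) * fibZ r)]
    rw [if_pos (Finset.mem_range.mpr hm)]
    have hfull : ∑ j ∈ Finset.range (m+1), (m.choose j : ℤ) * (2^(m-j)+1) * ((-1:ℤ)^(j+1) * Ee j r)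
        = ∑ j ∈ Finset.range m, (m.choose j : ℤ) * (2^(m-j)+1) * ((-1:ℤ)^(j+1) * Ee j r)
          + (m.choose m : ℤ) * (2^(m-m)+1) * ((-1:ℤ)^(m+1) * Ee m r) := Finset.sum_range_succ _ m
    rw [Imain m hm1 r] at hfull
    have hsum : ∑ j ∈ Finset.range m, (m.choose j : ℤ) * (2^(m-j)+1) * ((-1:ℤ)^(j+1) * Ee j r)
        = -(-1:ℤ)^(m+1) * Ee m r - fibZ (r-1) := by
      rw [Nat.choose_self, Nat.sub_self] at hfull
      push_cast at hfull
      linarith [hfull]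
    rw [hsum]
    have hD : Dd m r = (-1:ℤ)^(m+1) * Ee m r := by
      unfold Dd
      rw [if_neg (by omega : ¬ m = 0)]
      ring
    rw [hD]
    have h3 := fib_three r
    linarith [h3]

lemma eq_of_rec (C D : ℕ → ℤ) (a b : ℤ)
    (hC : ∀ m, C m = -2^m * a - b - ∑ j ∈ Finset.range m, (m.choose j : ℤ) * (2^(m-j)+1) * C j)
    (hD : ∀ m, D m = -2^m * a - b - ∑ j ∈ Finset.range m, (m.choose j : ℤ) * (2^(m-j)+1) * D j) :
    ∀ m, C m = D m := by
  intro m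
  induction m using Nat.strong_induction_on with
  | _ m IH =>
    rw [hC m, hD m]
    congr 1
    apply Finset.sum_congr rfl
    intro j hj
    rw [IH j (Finset.mem_range.mp hj)]

def EeL (m : ℕ) (r : ℤ) : ℤ := ∑ j ∈ Finset.range (m+1), eulerianA m j * lucasZ (j + m + r + 1)

def DL (m : ℕ) (r : ℤ) : ℤ := -(if m = 0 then (1:ℤ) else 0) * lucasZ r + (-1)^(m+1) * EeL m r

lemma EeL_split (m : ℕ) (r : ℤ) : EeL m r = Ee m (r-1) + Ee m (r+1) := by
  unfold EeL Ee
  rw [← Finset.sum_add_distrib]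
  apply Finset.sum_congr rfl
  intro j _
  unfold lucasZ
  have e1 : (j:ℤ) + m + r + 1 - 1 = (j:ℤ) + m + (r-1) + 1 := by ring
  have e2 : (j:ℤ) + m + r + 1 + 1 = (j:ℤ) + m + (r+1) + 1 := by ring
  rw [e1, e2]
  ring

lemma DL_split (m : ℕ) (r : ℤ) : DL m r = Dd m (r-1) + Dd m (r+1) := by
  unfold DL Dd lucasZ
  rw [EeL_split]
  ring

lemma DL_rec (m : ℕ) (r : ℤ) :
    DL m r = -2^m * lucasZ r - lucasZ (r + 1)
      - ∑ j ∈ Finset.range m, (m.choose j : ℤ) * (2 ^ (m - j) + 1) * DL j r := by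
  have h1 := Dd_rec m (r-1)
  have h2 := Dd_rec m (r+1)
  have hsum : ∑ j ∈ Finset.range m, (m.choose j : ℤ) * (2 ^ (m - j) + 1) * DL j r
      = (∑ j ∈ Finset.range m, (m.choose j : ℤ) * (2 ^ (m - j) + 1) * Dd j (r-1))
        + ∑ j ∈ Finset.range m, (m.choose j : ℤ) * (2 ^ (m - j) + 1) * Dd j (r+1) := by
    rw [← Finset.sum_add_distrib]
    apply Finset.sum_congr rfl
    intro j _
    rw [DL_split]
    ring
  rw [DL_split, hsum, h1, h2]
  unfold lucasZ
  have e1 : r - 1 + 1 = r := by ring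
  have e2 : r + 1 - 1 = r := by ring
  have e3 : r + 1 + 1 = r + 2 := by ring
  have e4 : r + 1 + 1 = r + 1 + 1 := rfl
  rw [e1, e2, e3]
  ring

theorem ledin_constants_closed_form (r : ℤ) (C K : ℕ → ℤ)
    (hC : ∀ m : ℕ, C m = -2 ^ m * fibZ r - fibZ (r + 1)
      - ∑ j ∈ Finset.range m, (m.choose j : ℤ) * (2 ^ (m - j) + 1) * C j)
    (hK : ∀ m : ℕ, K m = -2 ^ m * lucasZ r - lucasZ (r + 1)
      - ∑ j ∈ Finset.range m, (m.choose j : ℤ) * (2 ^ (m - j) + 1) * K j) :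
    ∀ m : ℕ,
      C m = -(if m = 0 then (1 : ℤ) else 0) * fibZ r
          + (-1) ^ (m + 1) * ∑ j ∈ Finset.range (m + 1), eulerianA m j * fibZ (j + m + r + 1) ∧
      K m = -(if m = 0 then (1 : ℤ) else 0) * lucasZ r
          + (-1) ^ (m + 1) * ∑ j ∈ Finset.range (m + 1), eulerianA m j * lucasZ (j + m + r + 1) := by
  have hCD : ∀ m, C m = Dd m r :=
    eq_of_rec C (fun m => Dd m r) (fibZ r) (fibZ (r+1)) hC (fun m => Dd_rec m r)
  have hKD : ∀ m, K m = DL m r :=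
    eq_of_rec K (fun m => DL m r) (lucasZ r) (lucasZ (r+1)) hK (fun m => DL_rec m r)
  intro m
  exact ⟨by rw [hCD m]; rfl, by rw [hKD m]; rfl⟩
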